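/- In the Heisenberg group 𝔥 = ℝ³, let d be the sub-Riemannian distance and let d_F be the Finsler distance associated with the norm ‖u‖ := max(√(u₁²+u₂²), |u₃|). Then for every r ≥ 0, the closed d_F-ball equals a vertical thickening of the closed d-ball: {q ∈ ℝ³ : d_F(0,q) ≤ r} = {p + λ·(0,0,1) : p ∈ ℝ³ with d(0,p) ≤ r, λ ∈ [−r,r]}. -/

import Mathlib

open MeasureTheory

/-- The Heisenberg group modeled on `ℝ³`. -/
abbrev Heis : Type := ℝ × ℝ × ℝ

/-- The Heisenberg Lie bracket `⁅(a,b,c),(a',b',c')⁆ = (0,0,ab'−a'b)`. -/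
def hbracket (x y : Heis) : Heis := (0, 0, x.1 * y.2.1 - y.1 * x.2.1)

/-- The Heisenberg group product `x∗y = x + y + (1/2)⁅x,y⁆`. -/
noncomputable def hmul (x y : Heis) : Heis := x + y + (2⁻¹ : ℝ) • hbracket x y

/-- The endpoint `E(u) = ∫₀¹ u + (1/2)∫₀¹ ⁅∫₀ᵗ u, u(t)⁆ dt` of the curve with control `u`. -/
noncomputable def hEndpoint (u : ℝ → Heis) : Heis :=
  (∫ t in (0:ℝ)..1, u t) +
    (2⁻¹ : ℝ) • ∫ t in (0:ℝ)..1, hbracket (∫ s in (0:ℝ)..t, u s) (u t)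

/-- The sub-Riemannian distance on the Heisenberg group: infimum of `∫₀¹ √(u₁²+u₂²)` over
`L¹` controls `u` with `u₃ = 0` a.e. steering `p` to `q`. -/
noncomputable def dH (p q : Heis) : ℝ :=
  sInf {l : ℝ | ∃ u : ℝ → Heis, IntervalIntegrable u volume 0 1 ∧
    (∀ᵐ t ∂(volume.restrict (Set.Icc (0:ℝ) 1)), (u t).2.2 = 0) ∧
    hEndpoint u = hmul (-p) q ∧
    l = ∫ t in (0:ℝ)..1, Real.sqrt ((u t).1 ^ 2 + (u t).2.1 ^ 2)}

/-- The Finsler distance associated with a norm `nrm` on `ℝ³`: infimum of `∫₀¹ nrm (u t)`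
over `L¹` controls `u` steering `p` to `q`. -/
noncomputable def dFin (nrm : Heis → ℝ) (p q : Heis) : ℝ :=
  sInf {l : ℝ | ∃ u : ℝ → Heis, IntervalIntegrable u volume 0 1 ∧
    hEndpoint u = hmul (-p) q ∧
    l = ∫ t in (0:ℝ)..1, nrm (u t)}


/-! ### Auxiliary development -/

lemma hmul_neg_zero (q : Heis) : hmul (-(0:Heis)) q = q := by
  simp only [hmul, hbracket, neg_zero]
  have : ((0:Heis)).1 = 0 := rfl
  refine Prod.ext ?_ (Prod.ext ?_ ?_) <;>
    simp [Prod.fst_add, Prod.snd_add, Prod.smul_mk]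

lemma heis_integral (f g h : ℝ → ℝ) (a b : ℝ)
    (hf : IntervalIntegrable f volume a b) (hg : IntervalIntegrable g volume a b)
    (hh : IntervalIntegrable h volume a b) :
    ∫ t in a..b, ((f t, g t, h t) : Heis) =
      ((∫ t in a..b, f t), (∫ t in a..b, g t), (∫ t in a..b, h t)) := by
  have key : ∀ s : Set ℝ, IntegrableOn f s volume → IntegrableOn g s volume →
      IntegrableOn h s volume →
      ∫ t in s, ((f t, g t, h t) : Heis) ∂volume =
        ((∫ t in s, f t ∂volume), (∫ t in s, g t ∂volume), (∫ t in s, h t ∂volume)) := by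
    intro s hf' hg' hh'
    rw [show (fun t => ((f t, g t, h t) : Heis)) = fun t => (f t, ((g t, h t) : ℝ × ℝ)) from rfl,
      integral_pair hf' (hg'.prodMk hh'), integral_pair hg' hh']
  simp only [intervalIntegral]
  rw [key _ hf.1 hg.1 hh.1, key _ hf.2 hg.2 hh.2]
  rfl

lemma II_triple (f g h : ℝ → ℝ) (a b : ℝ)
    (hf : IntervalIntegrable f volume a b) (hg : IntervalIntegrable g volume a b)
    (hh : IntervalIntegrable h volume a b) :
    IntervalIntegrable (fun t => ((f t, g t, h t) : Heis)) volume a b :=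
  ⟨hf.1.prodMk (hg.1.prodMk hh.1), hf.2.prodMk (hg.2.prodMk hh.2)⟩

noncomputable def br (f g : ℝ → ℝ) : ℝ → ℝ := fun t =>
  (∫ s in (0:ℝ)..t, f s) * g t - f t * (∫ s in (0:ℝ)..t, g s)

lemma hEndpoint_ctrl (f g h : ℝ → ℝ)
    (hf : IntervalIntegrable f volume 0 1) (hg : IntervalIntegrable g volume 0 1)
    (hh : IntervalIntegrable h volume 0 1)
    (hw : IntervalIntegrable (br f g) volume 0 1) :
    hEndpoint (fun t => (f t, g t, h t)) =
      ((∫ t in (0:ℝ)..1, f t), (∫ t in (0:ℝ)..1, g t),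
        (∫ t in (0:ℝ)..1, h t) + 2⁻¹ * ∫ t in (0:ℝ)..1, br f g t) := by
  have hcongr : Set.EqOn (fun t => hbracket (∫ s in (0:ℝ)..t, (f s, g s, h s)) (f t, g t, h t))
      (fun t => (((0:ℝ), (0:ℝ), br f g t) : Heis)) (Set.uIcc (0:ℝ) 1) := by
    intro t ht
    show hbracket (∫ s in (0:ℝ)..t, ((f s, g s, h s) : Heis)) (f t, g t, h t)
      = (((0:ℝ), (0:ℝ), br f g t) : Heis)
    have ht' : Set.uIcc (0:ℝ) t ⊆ Set.uIcc (0:ℝ) 1 := by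
      rw [Set.uIcc_of_le (by norm_num : (0:ℝ) ≤ 1)] at ht ⊢
      exact Set.uIcc_subset_Icc (by constructor <;> norm_num) ht
    rw [heis_integral f g h 0 t (hf.mono_set ht') (hg.mono_set ht') (hh.mono_set ht')]
    simp only [hbracket, br]
  unfold hEndpoint
  rw [heis_integral f g h 0 1 hf hg hh, intervalIntegral.integral_congr hcongr,
    heis_integral (fun _ => (0:ℝ)) (fun _ => (0:ℝ)) (br f g) 0 1 intervalIntegrable_const
      intervalIntegrable_const hw]
  refine Prod.ext ?_ (Prod.ext ?_ ?_) <;>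
    simp [Prod.fst_add, Prod.snd_add, Prod.smul_mk, smul_eq_mul]

section c2
variable {f g φ ψ : ℝ → ℝ}

lemma II_mono (hψ : IntervalIntegrable ψ volume 0 1)
    (hm : AEStronglyMeasurable φ (volume.restrict (Set.Ioc (0:ℝ) 1)))
    (hb : ∀ t, ‖φ t‖ ≤ ψ t) : IntervalIntegrable φ volume 0 1 := by
  rw [intervalIntegrable_iff_integrableOn_Ioc_of_le (by norm_num : (0:ℝ) ≤ 1)]
  exact Integrable.mono'
    ((intervalIntegrable_iff_integrableOn_Ioc_of_le (by norm_num : (0:ℝ) ≤ 1)).1 hψ)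
    hm (Filter.Eventually.of_forall hb)

lemma sqrt_cost_II (hf : IntervalIntegrable f volume 0 1) (hg : IntervalIntegrable g volume 0 1) :
    IntervalIntegrable (fun t => Real.sqrt (f t ^ 2 + g t ^ 2)) volume 0 1 := by
  have hfm : AEStronglyMeasurable f (volume.restrict (Set.Ioc (0:ℝ) 1)) :=
    ((intervalIntegrable_iff_integrableOn_Ioc_of_le (by norm_num)).1 hf).aestronglyMeasurable
  have hgm : AEStronglyMeasurable g (volume.restrict (Set.Ioc (0:ℝ) 1)) :=
    ((intervalIntegrable_iff_integrableOn_Ioc_of_le (by norm_num)).1 hg).aestronglyMeasurable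
  refine II_mono (hf.abs.add hg.abs) ?_ ?_
  · have : AEStronglyMeasurable (fun t => f t ^ 2 + g t ^ 2)
        (volume.restrict (Set.Ioc (0:ℝ) 1)) := by
      have := (hfm.mul hfm).add (hgm.mul hgm)
      refine this.congr (Filter.Eventually.of_forall fun t => ?_)
      simp only [Pi.add_apply, Pi.mul_apply]; ring
    exact Real.continuous_sqrt.comp_aestronglyMeasurable this
  · intro t
    rw [Real.norm_eq_abs, abs_of_nonneg (Real.sqrt_nonneg _)]
    calc Real.sqrt (f t ^ 2 + g t ^ 2) ≤ Real.sqrt ((|f t| + |g t|) ^ 2) := by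
          apply Real.sqrt_le_sqrt
          have := abs_nonneg (f t); have := abs_nonneg (g t)
          nlinarith [sq_abs (f t), sq_abs (g t)]
      _ = |f t| + |g t| := Real.sqrt_sq (by positivity)

lemma max_cost_II {h : ℝ → ℝ} (hf : IntervalIntegrable f volume 0 1)
    (hg : IntervalIntegrable g volume 0 1) (hh : IntervalIntegrable h volume 0 1) :
    IntervalIntegrable (fun t => max (Real.sqrt (f t ^ 2 + g t ^ 2)) |h t|) volume 0 1 := by
  have h1 := sqrt_cost_II hf hg
  have h1m : AEStronglyMeasurable (fun t => Real.sqrt (f t ^ 2 + g t ^ 2))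
      (volume.restrict (Set.Ioc (0:ℝ) 1)) :=
    ((intervalIntegrable_iff_integrableOn_Ioc_of_le (by norm_num)).1 h1).aestronglyMeasurable
  have h2m : AEStronglyMeasurable (fun t => |h t|) (volume.restrict (Set.Ioc (0:ℝ) 1)) :=
    ((intervalIntegrable_iff_integrableOn_Ioc_of_le (by norm_num)).1 hh.abs).aestronglyMeasurable
  refine II_mono (h1.add hh.abs) (h1m.sup h2m) ?_
  intro t
  rw [Real.norm_eq_abs, abs_of_nonneg (le_trans (Real.sqrt_nonneg _) (le_max_left _ _))]
  exact max_le (le_add_of_nonneg_right (abs_nonneg _))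
    (le_add_of_nonneg_left (Real.sqrt_nonneg _))

lemma br_II (hf : IntervalIntegrable f volume 0 1) (hg : IntervalIntegrable g volume 0 1) :
    IntervalIntegrable (br f g) volume 0 1 := by
  have key : ∀ u v : ℝ → ℝ, IntervalIntegrable u volume 0 1 → IntervalIntegrable v volume 0 1 →
      IntervalIntegrable (fun t => (∫ s in (0:ℝ)..t, u s) * v t) volume 0 1 := by
    intro u v hu hv
    have hU : ContinuousOn (fun t => ∫ s in (0:ℝ)..t, u s) (Set.uIcc (0:ℝ) 1) :=
      intervalIntegral.continuousOn_primitive_interval' hu Set.left_mem_uIcc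
    have hUIcc : ContinuousOn (fun t => ∫ s in (0:ℝ)..t, u s) (Set.Icc (0:ℝ) 1) := by
      rwa [Set.uIcc_of_le (by norm_num : (0:ℝ) ≤ 1)] at hU
    obtain ⟨C, hC⟩ := (isCompact_Icc : IsCompact (Set.Icc (0:ℝ) 1)).exists_bound_of_continuousOn
      hUIcc
    rw [intervalIntegrable_iff_integrableOn_Ioc_of_le (by norm_num : (0:ℝ) ≤ 1)]
    refine Integrable.bdd_mul (c := C)
      ((intervalIntegrable_iff_integrableOn_Ioc_of_le (by norm_num : (0:ℝ) ≤ 1)).1 hv)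
      ((hUIcc.mono Set.Ioc_subset_Icc_self).aestronglyMeasurable measurableSet_Ioc) ?_
    rw [ae_restrict_iff' measurableSet_Ioc]
    exact Filter.Eventually.of_forall fun t ht => hC t (Set.Ioc_subset_Icc_self ht)
  have h1 := key f g hf hg
  have h2 := key g f hg hf
  have : IntervalIntegrable (fun t => (∫ s in (0:ℝ)..t, f s) * g t
      - (∫ s in (0:ℝ)..t, g s) * f t) volume 0 1 := h1.sub h2
  have e : br f g = fun t => (∫ s in (0:ℝ)..t, f s) * g t
      - (∫ s in (0:ℝ)..t, g s) * f t := by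
    funext t; unfold br; ring
  rw [e]; exact this

end c2

lemma hasDerivAt_P5 (c₁ c₂ c₃ c₄ c₅ : ℝ) (t : ℝ) :
    HasDerivAt (fun s : ℝ => c₁*s + c₂*s^2 + c₃*s^3 + c₄*s^4 + c₅*s^5)
      (c₁ + 2*c₂*t + 3*c₃*t^2 + 4*c₄*t^3 + 5*c₅*t^4) t := by
  have h1 : HasDerivAt (fun s : ℝ => c₁ * s ^ 1) (c₁ * ((1:ℕ) * t ^ 0)) t :=
    (hasDerivAt_pow 1 t).const_mul c₁
  have h2 : HasDerivAt (fun s : ℝ => c₂ * s ^ 2) (c₂ * ((2:ℕ) * t ^ 1)) t :=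
    (hasDerivAt_pow 2 t).const_mul c₂
  have h3 : HasDerivAt (fun s : ℝ => c₃ * s ^ 3) (c₃ * ((3:ℕ) * t ^ 2)) t :=
    (hasDerivAt_pow 3 t).const_mul c₃
  have h4 : HasDerivAt (fun s : ℝ => c₄ * s ^ 4) (c₄ * ((4:ℕ) * t ^ 3)) t :=
    (hasDerivAt_pow 4 t).const_mul c₄
  have h5 : HasDerivAt (fun s : ℝ => c₅ * s ^ 5) (c₅ * ((5:ℕ) * t ^ 4)) t :=
    (hasDerivAt_pow 5 t).const_mul c₅
  have h := (((h1.add h2).add h3).add h4).add h5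
  simp only [pow_one] at h
  refine h.congr_deriv ?_
  push_cast
  ring

lemma integral_P4 (c₀ c₁ c₂ c₃ c₄ : ℝ) (x : ℝ) :
    ∫ t in (0:ℝ)..x, (c₀ + c₁*t + c₂*t^2 + c₃*t^3 + c₄*t^4) =
      c₀*x + c₁/2*x^2 + c₂/3*x^3 + c₃/4*x^4 + c₄/5*x^5 := by
  have hd : ∀ t ∈ Set.uIcc (0:ℝ) x,
      HasDerivAt (fun s : ℝ => c₀*s + (c₁/2)*s^2 + (c₂/3)*s^3 + (c₃/4)*s^4 + (c₄/5)*s^5)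
        (c₀ + c₁*t + c₂*t^2 + c₃*t^3 + c₄*t^4) t := by
    intro t _
    have := hasDerivAt_P5 c₀ (c₁/2) (c₂/3) (c₃/4) (c₄/5) t
    convert this using 1
    ring
  rw [intervalIntegral.integral_eq_sub_of_hasDerivAt hd
    ((Continuous.intervalIntegrable (by fun_prop) _ _))]
  ring

/-! ### The explicit polynomial control family -/

noncomputable def cf (x α : ℝ) : ℝ → ℝ := fun t => x + α*(1 - 2*t)
noncomputable def cg (y β : ℝ) : ℝ → ℝ := fun t => y + β*(2*t - 3*t^2)

lemma cf_cont (x α : ℝ) : Continuous (cf x α) := by unfold cf; fun_prop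
lemma cg_cont (y β : ℝ) : Continuous (cg y β) := by unfold cg; fun_prop
lemma cf_II (x α : ℝ) : IntervalIntegrable (cf x α) volume 0 1 :=
  (cf_cont x α).intervalIntegrable 0 1
lemma cg_II (y β : ℝ) : IntervalIntegrable (cg y β) volume 0 1 :=
  (cg_cont y β).intervalIntegrable 0 1

lemma cf_int (x α t : ℝ) : ∫ s in (0:ℝ)..t, cf x α s = x*t + α*t - α*t^2 := by
  rw [show cf x α = fun s => (x + α) + (-(2*α))*s + 0*s^2 + 0*s^3 + 0*s^4 from
    funext fun s => by unfold cf; ring, integral_P4]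
  ring

lemma cg_int (y β t : ℝ) : ∫ s in (0:ℝ)..t, cg y β s = y*t + β*t^2 - β*t^3 := by
  rw [show cg y β = fun s => y + (2*β)*s + (-(3*β))*s^2 + 0*s^3 + 0*s^4 from
    funext fun s => by unfold cg; ring, integral_P4]
  ring

lemma br_family (x y α β : ℝ) : br (cf x α) (cg y β) = fun t =>
    0 + 0*t + (β*x + α*y + α*β)*t^2 + (-(2*β*x) - 2*α*β)*t^3 + (α*β)*t^4 := by
  funext t
  unfold br
  rw [cf_int, cg_int]
  unfold cf cg
  ring

lemma endpoint_family (x y α β : ℝ) :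
    hEndpoint (fun t => ((cf x α t, cg y β t, (0:ℝ)) : Heis)) =
      (x, y, -(β*x)/12 + α*y/6 + α*β/60) := by
  rw [hEndpoint_ctrl (cf x α) (cg y β) (fun _ => 0) (cf_II x α) (cg_II y β)
    intervalIntegrable_const (by rw [br_family]; exact Continuous.intervalIntegrable (by fun_prop) _ _)]
  rw [cf_int, cg_int, br_family]
  rw [integral_P4]
  norm_num
  ring

lemma reach (v : Heis) : ∃ x y α β : ℝ,
    hEndpoint (fun t => ((cf x α t, cg y β t, (0:ℝ)) : Heis)) = v := by
  obtain ⟨x, y, z⟩ := v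
  by_cases hx : x ≠ 0
  · refine ⟨x, y, 0, -12*z/x, ?_⟩
    rw [endpoint_family]
    refine Prod.ext rfl (Prod.ext rfl ?_)
    show -(-12*z/x*x)/12 + 0*y/6 + 0*(-12*z/x)/60 = z
    field_simp
    ring
  by_cases hy : y ≠ 0
  · refine ⟨x, y, 6*z/y, 0, ?_⟩
    rw [endpoint_family]
    refine Prod.ext rfl (Prod.ext rfl ?_)
    show -(0*x)/12 + 6*z/y*y/6 + 6*z/y*0/60 = z
    field_simp
    ring
  · push_neg at hx hy
    refine ⟨x, y, 60*z, 1, ?_⟩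
    rw [endpoint_family, hx, hy]
    refine Prod.ext rfl (Prod.ext rfl ?_)
    show -(1*0)/12 + 60*z*0/6 + 60*z*1/60 = z
    ring

lemma abs_cg_le (β t : ℝ) (ht : t ∈ Set.Icc (0:ℝ) 1) : |cg 0 β t| ≤ |β| := by
  unfold cg
  rw [zero_add, abs_mul]
  obtain ⟨h0, h1⟩ := ht
  have : |2*t - 3*t^2| ≤ 1 := by
    rw [abs_le]; constructor <;> nlinarith
  nlinarith [abs_nonneg β]

lemma abs_cf_le (α t : ℝ) (ht : t ∈ Set.Icc (0:ℝ) 1) : |cf 0 α t| ≤ |α| := by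
  unfold cf
  rw [zero_add, abs_mul]
  obtain ⟨h0, h1⟩ := ht
  have : |1 - 2*t| ≤ 1 := by
    rw [abs_le]; constructor <;> nlinarith
  nlinarith [abs_nonneg α]

lemma sqrt_add_sq_le (a b : ℝ) : Real.sqrt (a^2 + b^2) ≤ |a| + |b| := by
  calc Real.sqrt (a^2 + b^2) ≤ Real.sqrt ((|a| + |b|)^2) := by
        apply Real.sqrt_le_sqrt
        nlinarith [abs_nonneg a, abs_nonneg b, sq_abs a, sq_abs b]
    _ = |a| + |b| := Real.sqrt_sq (by positivity)

lemma loop_cost (α β : ℝ) :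
    ∫ t in (0:ℝ)..1, Real.sqrt ((cf 0 α t)^2 + (cg 0 β t)^2) ≤ |α| + |β| := by
  have h1 : IntervalIntegrable (fun t => Real.sqrt ((cf 0 α t)^2 + (cg 0 β t)^2)) volume 0 1 :=
    sqrt_cost_II (cf_II 0 α) (cg_II 0 β)
  calc ∫ t in (0:ℝ)..1, Real.sqrt ((cf 0 α t)^2 + (cg 0 β t)^2)
      ≤ ∫ _t in (0:ℝ)..1, (|α| + |β|) := by
        apply intervalIntegral.integral_mono_on (by norm_num) h1 intervalIntegrable_const
        intro t ht
        exact le_trans (sqrt_add_sq_le _ _)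
          (add_le_add (abs_cf_le α t ht) (abs_cg_le β t ht))
    _ = |α| + |β| := by simp

lemma vert_reach (μ : ℝ) : ∃ α β : ℝ,
    hEndpoint (fun t => ((cf 0 α t, cg 0 β t, (0:ℝ)) : Heis)) = (0, 0, μ) ∧
    |α| + |β| ≤ 2 * Real.sqrt (60*|μ|) := by
  set s := Real.sqrt (60*|μ|) with hs
  have hs0 : 0 ≤ s := Real.sqrt_nonneg _
  have hss : s * s = 60 * |μ| := Real.mul_self_sqrt (by positivity)
  refine ⟨if 0 ≤ μ then s else -s, s, ?_, ?_⟩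
  · rw [endpoint_family]
    refine Prod.ext rfl (Prod.ext rfl ?_)
    show -(s*0)/12 + (if 0 ≤ μ then s else -s)*0/6 + (if 0 ≤ μ then s else -s)*s/60 = μ
    by_cases h : 0 ≤ μ
    · rw [if_pos h]
      rw [abs_of_nonneg h] at hss
      linarith [hss]
    · rw [if_neg h]
      push_neg at h
      rw [abs_of_neg h] at hss
      nlinarith [hss]
  · by_cases h : 0 ≤ μ <;> simp [h, abs_of_nonneg hs0, abs_of_nonpos (neg_nonpos.mpr hs0)] <;>
      linarith

/-! ### Concatenation of controls -/

noncomputable def cat (f g : ℝ → ℝ) : ℝ → ℝ := fun t =>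
  if t ≤ 1/2 then 2 * f (2*t) else 2 * g (2*t - 1)

section cat
variable {f g : ℝ → ℝ}

lemma cat_base_left (hf : IntervalIntegrable f volume 0 1) :
    IntervalIntegrable (fun t => 2 * f (2*t)) volume 0 (1/2) := by
  have h := hf.comp_mul_left (c := 2)
  norm_num at h
  exact h.const_mul 2

lemma cat_base_right (hg : IntervalIntegrable g volume 0 1) :
    IntervalIntegrable (fun t => 2 * g (2*t - 1)) volume (1/2) 1 := by
  have h := (hg.comp_sub_right 1).comp_mul_left (c := 2)
  norm_num at h
  exact h.const_mul 2

lemma cat_II_left (hf : IntervalIntegrable f volume 0 1) :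
    IntervalIntegrable (cat f g) volume 0 (1/2) := by
  rw [intervalIntegrable_iff_integrableOn_Ioc_of_le (by norm_num : (0:ℝ) ≤ 1/2)]
  refine ((intervalIntegrable_iff_integrableOn_Ioc_of_le
    (by norm_num : (0:ℝ) ≤ 1/2)).1 (cat_base_left hf)).congr_fun ?_ measurableSet_Ioc
  intro t ht
  simp only [cat, if_pos ht.2]

lemma cat_II_right (hg : IntervalIntegrable g volume 0 1) :
    IntervalIntegrable (cat f g) volume (1/2) 1 := by
  rw [intervalIntegrable_iff_integrableOn_Ioc_of_le (by norm_num : (1:ℝ)/2 ≤ 1)]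
  refine ((intervalIntegrable_iff_integrableOn_Ioc_of_le
    (by norm_num : (1:ℝ)/2 ≤ 1)).1 (cat_base_right hg)).congr_fun ?_ measurableSet_Ioc
  intro t ht
  simp only [cat, if_neg (not_le.mpr ht.1)]

lemma cat_II (hf : IntervalIntegrable f volume 0 1) (hg : IntervalIntegrable g volume 0 1) :
    IntervalIntegrable (cat f g) volume 0 1 :=
  (cat_II_left hf).trans (cat_II_right hg)

lemma cat_prim1 (hf : IntervalIntegrable f volume 0 1) {t : ℝ} (h0 : 0 ≤ t) (h2 : t ≤ 1/2) :
    ∫ s in (0:ℝ)..t, cat f g s = ∫ s in (0:ℝ)..(2*t), f s := by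
  have hcongr : Set.EqOn (cat f g) (fun s => 2 * f (2*s)) (Set.uIcc 0 t) := by
    intro s hs
    rw [Set.uIcc_of_le h0] at hs
    simp only [cat, if_pos (le_trans hs.2 h2)]
  rw [intervalIntegral.integral_congr hcongr, intervalIntegral.integral_const_mul,
    intervalIntegral.integral_comp_mul_left _ (two_ne_zero), smul_eq_mul, ← mul_assoc]
  norm_num

lemma cat_prim2 (hf : IntervalIntegrable f volume 0 1) (hg : IntervalIntegrable g volume 0 1)
    {t : ℝ} (h0 : 1/2 ≤ t) (h2 : t ≤ 1) :
    ∫ s in (0:ℝ)..t, cat f g s = (∫ s in (0:ℝ)..1, f s) + ∫ s in (0:ℝ)..(2*t-1), g s := by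
  have hsub : Set.uIcc (1/2 : ℝ) t ⊆ Set.uIcc (1/2 : ℝ) 1 :=
    Set.uIcc_subset_uIcc Set.left_mem_uIcc (by rw [Set.uIcc_of_le (by norm_num)]; exact ⟨h0, h2⟩)
  rw [← intervalIntegral.integral_add_adjacent_intervals (cat_II_left hf)
    ((cat_II_right hg).mono_set hsub)]
  congr 1
  · have := cat_prim1 (g := g) hf (by norm_num : (0:ℝ) ≤ 1/2) (le_refl _)
    norm_num at this ⊢
    exact this
  · have hcongr : ∀ᵐ s ∂(volume : Measure ℝ), s ∈ Set.uIoc (1/2:ℝ) t →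
        cat f g s = 2 * g (2*s - 1) := by
      refine Filter.Eventually.of_forall fun s hs => ?_
      rw [Set.uIoc_of_le h0] at hs
      simp only [cat, if_neg (not_le.mpr hs.1)]
    rw [intervalIntegral.integral_congr_ae hcongr, intervalIntegral.integral_const_mul,
      intervalIntegral.integral_comp_mul_sub _ (two_ne_zero) 1, smul_eq_mul, ← mul_assoc]
    norm_num

end cat

section catmain
variable {c f g p q : ℝ → ℝ}

lemma half_stretch_left (c : ℝ → ℝ) :
    ∫ t in (0:ℝ)..(1/2), 2 * c (2*t) = ∫ t in (0:ℝ)..1, c t := by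
  rw [intervalIntegral.integral_const_mul, intervalIntegral.integral_comp_mul_left _ two_ne_zero,
    smul_eq_mul, ← mul_assoc]
  norm_num

lemma half_stretch_right (c : ℝ → ℝ) :
    ∫ t in (1/2:ℝ)..1, 2 * c (2*t - 1) = ∫ t in (0:ℝ)..1, c t := by
  rw [intervalIntegral.integral_const_mul,
    intervalIntegral.integral_comp_mul_sub _ two_ne_zero 1, smul_eq_mul, ← mul_assoc]
  norm_num

lemma cat_int (hf : IntervalIntegrable f volume 0 1) (hg : IntervalIntegrable g volume 0 1) :
    ∫ s in (0:ℝ)..1, cat f g s = (∫ s in (0:ℝ)..1, f s) + ∫ s in (0:ℝ)..1, g s := by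
  have := cat_prim2 hf hg (by norm_num : (1:ℝ)/2 ≤ 1) (le_refl 1)
  norm_num at this
  exact this

lemma cat_br (hf : IntervalIntegrable f volume 0 1) (hg : IntervalIntegrable g volume 0 1)
    (hp : IntervalIntegrable p volume 0 1) (hq : IntervalIntegrable q volume 0 1) :
    ∫ t in (0:ℝ)..1, br (cat f p) (cat g q) t =
      (∫ t in (0:ℝ)..1, br f g t) + (∫ t in (0:ℝ)..1, br p q t)
      + (∫ t in (0:ℝ)..1, f t) * (∫ t in (0:ℝ)..1, q t)
      - (∫ t in (0:ℝ)..1, g t) * (∫ t in (0:ℝ)..1, p t) := by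
  set F1 := ∫ t in (0:ℝ)..1, f t with hF1
  set G1 := ∫ t in (0:ℝ)..1, g t with hG1
  have e1 : ∀ t ∈ Set.Icc (0:ℝ) (1/2), br (cat f p) (cat g q) t = 2 * br f g (2*t) := by
    intro t ht
    unfold br
    rw [cat_prim1 hf ht.1 ht.2, cat_prim1 hg ht.1 ht.2]
    simp only [cat, if_pos ht.2]
    ring
  have e2 : ∀ t ∈ Set.Ioc (1/2:ℝ) 1, br (cat f p) (cat g q) t =
      2 * br p q (2*t-1) + 2 * (F1 * q (2*t-1) - G1 * p (2*t-1)) := by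
    intro t ht
    unfold br
    rw [cat_prim2 hf hp (le_of_lt ht.1) ht.2, cat_prim2 hg hq (le_of_lt ht.1) ht.2]
    simp only [cat, if_neg (not_le.mpr ht.1)]
    rw [hF1, hG1]
    ring
  have hbrfg := br_II hf hg
  have hbrpq := br_II hp hq
  have hm1 : IntervalIntegrable (fun t => 2 * br f g (2*t)) volume 0 (1/2) :=
    cat_base_left hbrfg
  have hm2a : IntervalIntegrable (fun t => 2 * br p q (2*t-1)) volume (1/2) 1 :=
    cat_base_right hbrpq
  have hq2 : IntervalIntegrable (fun t => 2 * q (2*t-1)) volume (1/2) 1 := cat_base_right hq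
  have hp2 : IntervalIntegrable (fun t => 2 * p (2*t-1)) volume (1/2) 1 := cat_base_right hp
  have hm2b : IntervalIntegrable (fun t => 2 * (F1 * q (2*t-1) - G1 * p (2*t-1)))
      volume (1/2) 1 := by
    have e : (fun t => 2 * (F1 * q (2*t-1) - G1 * p (2*t-1)))
        = fun t => F1 * (2 * q (2*t-1)) - G1 * (2 * p (2*t-1)) := funext fun t => by ring
    rw [e]
    exact (hq2.const_mul F1).sub (hp2.const_mul G1)
  have hc1 : IntervalIntegrable (br (cat f p) (cat g q)) volume 0 (1/2) := by
    rw [intervalIntegrable_iff_integrableOn_Ioc_of_le (by norm_num : (0:ℝ) ≤ 1/2)]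
    refine ((intervalIntegrable_iff_integrableOn_Ioc_of_le
      (by norm_num : (0:ℝ) ≤ 1/2)).1 hm1).congr_fun ?_ measurableSet_Ioc
    exact fun t ht => (e1 t (Set.Ioc_subset_Icc_self ht)).symm
  have hc2 : IntervalIntegrable (br (cat f p) (cat g q)) volume (1/2) 1 := by
    rw [intervalIntegrable_iff_integrableOn_Ioc_of_le (by norm_num : (1:ℝ)/2 ≤ 1)]
    refine ((intervalIntegrable_iff_integrableOn_Ioc_of_le
      (by norm_num : (1:ℝ)/2 ≤ 1)).1 (hm2a.add hm2b)).congr_fun ?_ measurableSet_Ioc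
    exact fun t ht => (e2 t ht).symm
  rw [← intervalIntegral.integral_add_adjacent_intervals hc1 hc2]
  have pieceA : ∫ t in (0:ℝ)..(1/2), br (cat f p) (cat g q) t = ∫ t in (0:ℝ)..1, br f g t := by
    rw [intervalIntegral.integral_congr (g := fun t => 2 * br f g (2*t))
      (fun t ht => e1 t (by rwa [Set.uIcc_of_le (by norm_num : (0:ℝ) ≤ 1/2)] at ht))]
    exact half_stretch_left (br f g)
  have pieceB : ∫ t in (1/2:ℝ)..1, br (cat f p) (cat g q) t =
      (∫ t in (0:ℝ)..1, br p q t) + (F1 * (∫ t in (0:ℝ)..1, q t)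
        - G1 * (∫ t in (0:ℝ)..1, p t)) := by
    rw [intervalIntegral.integral_congr_ae (Filter.Eventually.of_forall fun t ht =>
      e2 t (by rwa [Set.uIoc_of_le (by norm_num : (1:ℝ)/2 ≤ 1)] at ht))]
    rw [intervalIntegral.integral_add hm2a hm2b]
    congr 1
    · exact half_stretch_right (br p q)
    · have e : (fun t => 2 * (F1 * q (2*t-1) - G1 * p (2*t-1)))
          = fun t => F1 * (2 * q (2*t-1)) - G1 * (2 * p (2*t-1)) := funext fun t => by ring
      have h1 : ∫ t in (1/2:ℝ)..1, F1 * (2 * q (2*t-1)) = F1 * ∫ t in (0:ℝ)..1, q t := by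
        rw [intervalIntegral.integral_const_mul, half_stretch_right q]
      have h2 : ∫ t in (1/2:ℝ)..1, G1 * (2 * p (2*t-1)) = G1 * ∫ t in (0:ℝ)..1, p t := by
        rw [intervalIntegral.integral_const_mul, half_stretch_right p]
      rw [e, intervalIntegral.integral_sub (hq2.const_mul F1) (hp2.const_mul G1), h1, h2]
  rw [pieceA, pieceB]
  ring

lemma cat_cost (hf : IntervalIntegrable f volume 0 1) (hg : IntervalIntegrable g volume 0 1)
    (hp : IntervalIntegrable p volume 0 1) (hq : IntervalIntegrable q volume 0 1) :
    ∫ t in (0:ℝ)..1, Real.sqrt ((cat f p t)^2 + (cat g q t)^2) =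
      (∫ t in (0:ℝ)..1, Real.sqrt (f t^2 + g t^2))
      + ∫ t in (0:ℝ)..1, Real.sqrt (p t^2 + q t^2) := by
  have key : ∀ a b : ℝ, Real.sqrt ((2*a)^2 + (2*b)^2) = 2 * Real.sqrt (a^2 + b^2) := by
    intro a b
    rw [show (2*a)^2 + (2*b)^2 = 2^2 * (a^2+b^2) by ring,
      Real.sqrt_mul (by positivity) , Real.sqrt_sq (by norm_num : (0:ℝ) ≤ 2)]
  have e1 : ∀ t ∈ Set.Icc (0:ℝ) (1/2), Real.sqrt ((cat f p t)^2 + (cat g q t)^2)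
      = 2 * Real.sqrt ((f (2*t))^2 + (g (2*t))^2) := by
    intro t ht
    simp only [cat, if_pos ht.2]
    exact key _ _
  have e2 : ∀ t ∈ Set.Ioc (1/2:ℝ) 1, Real.sqrt ((cat f p t)^2 + (cat g q t)^2)
      = 2 * Real.sqrt ((p (2*t-1))^2 + (q (2*t-1))^2) := by
    intro t ht
    simp only [cat, if_neg (not_le.mpr ht.1)]
    exact key _ _
  have hcfg := sqrt_cost_II hf hg
  have hcpq := sqrt_cost_II hp hq
  have hm1 : IntervalIntegrable (fun t => 2 * Real.sqrt ((f (2*t))^2 + (g (2*t))^2))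
      volume 0 (1/2) :=
    cat_base_left (f := fun s => Real.sqrt (f s^2 + g s^2)) hcfg
  have hm2 : IntervalIntegrable (fun t => 2 * Real.sqrt ((p (2*t-1))^2 + (q (2*t-1))^2))
      volume (1/2) 1 :=
    cat_base_right (g := fun s => Real.sqrt (p s^2 + q s^2)) hcpq
  have hc1 : IntervalIntegrable (fun t => Real.sqrt ((cat f p t)^2 + (cat g q t)^2))
      volume 0 (1/2) := by
    rw [intervalIntegrable_iff_integrableOn_Ioc_of_le (by norm_num : (0:ℝ) ≤ 1/2)]
    refine ((intervalIntegrable_iff_integrableOn_Ioc_of_le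
      (by norm_num : (0:ℝ) ≤ 1/2)).1 hm1).congr_fun ?_ measurableSet_Ioc
    exact fun t ht => (e1 t (Set.Ioc_subset_Icc_self ht)).symm
  have hc2 : IntervalIntegrable (fun t => Real.sqrt ((cat f p t)^2 + (cat g q t)^2))
      volume (1/2) 1 := by
    rw [intervalIntegrable_iff_integrableOn_Ioc_of_le (by norm_num : (1:ℝ)/2 ≤ 1)]
    refine ((intervalIntegrable_iff_integrableOn_Ioc_of_le
      (by norm_num : (1:ℝ)/2 ≤ 1)).1 hm2).congr_fun ?_ measurableSet_Ioc
    exact fun t ht => (e2 t ht).symm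
  rw [← intervalIntegral.integral_add_adjacent_intervals hc1 hc2]
  congr 1
  · rw [intervalIntegral.integral_congr (g := fun t => 2 * Real.sqrt ((f (2*t))^2 + (g (2*t))^2))
      (fun t ht => e1 t (by rwa [Set.uIcc_of_le (by norm_num : (0:ℝ) ≤ 1/2)] at ht))]
    exact half_stretch_left (fun s => Real.sqrt (f s^2 + g s^2))
  · rw [intervalIntegral.integral_congr_ae (Filter.Eventually.of_forall fun t ht =>
      e2 t (by rwa [Set.uIoc_of_le (by norm_num : (1:ℝ)/2 ≤ 1)] at ht))]
    exact half_stretch_right (fun s => Real.sqrt (p s^2 + q s^2))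

end catmain

/-! ### API for the distances -/

noncomputable def Nrm : Heis → ℝ := fun u => max (Real.sqrt (u.1 ^ 2 + u.2.1 ^ 2)) |u.2.2|

def SH (v : Heis) : Set ℝ := {l : ℝ | ∃ u : ℝ → Heis, IntervalIntegrable u volume 0 1 ∧
    (∀ᵐ t ∂(volume.restrict (Set.Icc (0:ℝ) 1)), (u t).2.2 = 0) ∧
    hEndpoint u = v ∧
    l = ∫ t in (0:ℝ)..1, Real.sqrt ((u t).1 ^ 2 + (u t).2.1 ^ 2)}

def SF (v : Heis) : Set ℝ := {l : ℝ | ∃ u : ℝ → Heis, IntervalIntegrable u volume 0 1 ∧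
    hEndpoint u = v ∧ l = ∫ t in (0:ℝ)..1, Nrm (u t)}

lemma dH_zero_eq (v : Heis) : dH 0 v = sInf (SH v) := by
  unfold dH SH
  rw [hmul_neg_zero]

lemma dFin_zero_eq (v : Heis) : dFin Nrm 0 v = sInf (SF v) := by
  unfold dFin SF
  rw [hmul_neg_zero]

lemma SH_nonneg {v : Heis} {l : ℝ} (hl : l ∈ SH v) : 0 ≤ l := by
  obtain ⟨u, -, -, -, rfl⟩ := hl
  exact intervalIntegral.integral_nonneg (by norm_num) (fun t _ => Real.sqrt_nonneg _)

lemma SF_nonneg {v : Heis} {l : ℝ} (hl : l ∈ SF v) : 0 ≤ l := by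
  obtain ⟨u, -, -, rfl⟩ := hl
  exact intervalIntegral.integral_nonneg (by norm_num)
    (fun t _ => le_trans (Real.sqrt_nonneg _) (le_max_left _ _))

lemma SH_bdd (v : Heis) : BddBelow (SH v) := ⟨0, fun _ hl => SH_nonneg hl⟩
lemma SF_bdd (v : Heis) : BddBelow (SF v) := ⟨0, fun _ hl => SF_nonneg hl⟩

lemma SH_nonempty (v : Heis) : (SH v).Nonempty := by
  obtain ⟨x, y, α, β, he⟩ := reach v
  exact ⟨_, ⟨fun t => ((cf x α t, cg y β t, (0:ℝ)) : Heis),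
    II_triple _ _ _ _ _ (cf_II x α) (cg_II y β) intervalIntegrable_const,
    Filter.Eventually.of_forall (fun t => rfl), he, rfl⟩⟩

lemma SF_nonempty (v : Heis) : (SF v).Nonempty := by
  obtain ⟨x, y, α, β, he⟩ := reach v
  exact ⟨_, ⟨fun t => ((cf x α t, cg y β t, (0:ℝ)) : Heis),
    II_triple _ _ _ _ _ (cf_II x α) (cg_II y β) intervalIntegrable_const, he, rfl⟩⟩

lemma dH_nonneg (v : Heis) : 0 ≤ dH 0 v := by
  rw [dH_zero_eq]
  exact le_csInf (SH_nonempty v) (fun _ hl => SH_nonneg hl)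

lemma dH_le {f g : ℝ → ℝ} (hf : IntervalIntegrable f volume 0 1)
    (hg : IntervalIntegrable g volume 0 1) {v : Heis}
    (he : hEndpoint (fun t => ((f t, g t, (0:ℝ)) : Heis)) = v) :
    dH 0 v ≤ ∫ t in (0:ℝ)..1, Real.sqrt (f t ^ 2 + g t ^ 2) := by
  rw [dH_zero_eq]
  exact csInf_le (SH_bdd v) ⟨fun t => ((f t, g t, (0:ℝ)) : Heis),
    II_triple _ _ _ _ _ hf hg intervalIntegrable_const,
    Filter.Eventually.of_forall (fun t => rfl), he, rfl⟩

lemma dFin_le {u : ℝ → Heis} (hu : IntervalIntegrable u volume 0 1) {v : Heis}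
    (he : hEndpoint u = v) : dFin Nrm 0 v ≤ ∫ t in (0:ℝ)..1, Nrm (u t) := by
  rw [dFin_zero_eq]
  exact csInf_le (SF_bdd v) ⟨u, hu, he, rfl⟩

lemma integral_zero_of_ae_Icc {φ : ℝ → ℝ}
    (h : ∀ᵐ t ∂(volume.restrict (Set.Icc (0:ℝ) 1)), φ t = 0) :
    ∫ t in (0:ℝ)..1, φ t = 0 := by
  rw [intervalIntegral.integral_of_le (by norm_num : (0:ℝ) ≤ 1)]
  apply integral_eq_zero_of_ae
  exact ae_restrict_of_ae_restrict_of_subset Set.Ioc_subset_Icc_self h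

lemma hEndpoint_decomp (u : ℝ → Heis) (hu : IntervalIntegrable u volume 0 1) :
    hEndpoint u = hEndpoint (fun t => (((u t).1, (u t).2.1, (0:ℝ)) : Heis))
      + ((0:ℝ), (0:ℝ), ∫ t in (0:ℝ)..1, (u t).2.2) := by
  have hf : IntervalIntegrable (fun t => (u t).1) volume 0 1 := ⟨hu.1.fst, hu.2.fst⟩
  have hg : IntervalIntegrable (fun t => (u t).2.1) volume 0 1 :=
    ⟨hu.1.snd.fst, hu.2.snd.fst⟩
  have hh : IntervalIntegrable (fun t => (u t).2.2) volume 0 1 :=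
    ⟨hu.1.snd.snd, hu.2.snd.snd⟩
  have hbr := br_II hf hg
  have e : u = fun t => (((u t).1, (u t).2.1, (u t).2.2) : Heis) := funext fun t => rfl
  conv_lhs => rw [e]
  rw [hEndpoint_ctrl _ _ _ hf hg hh hbr, hEndpoint_ctrl _ _ _ hf hg intervalIntegrable_const hbr]
  refine Prod.ext ?_ (Prod.ext ?_ ?_) <;>
    simp [Prod.fst_add, Prod.snd_add]
  ring

lemma cat_endpoint_hor {f g p q : ℝ → ℝ} (hf : IntervalIntegrable f volume 0 1)
    (hg : IntervalIntegrable g volume 0 1) (hp : IntervalIntegrable p volume 0 1)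
    (hq : IntervalIntegrable q volume 0 1)
    (hp0 : ∫ t in (0:ℝ)..1, p t = 0) (hq0 : ∫ t in (0:ℝ)..1, q t = 0) :
    hEndpoint (fun t => ((cat f p t, cat g q t, (0:ℝ)) : Heis)) =
      hEndpoint (fun t => ((f t, g t, (0:ℝ)) : Heis))
      + hEndpoint (fun t => ((p t, q t, (0:ℝ)) : Heis)) := by
  rw [hEndpoint_ctrl _ _ _ (cat_II hf hp) (cat_II hg hq) intervalIntegrable_const
      (br_II (cat_II hf hp) (cat_II hg hq)),
    hEndpoint_ctrl _ _ _ hf hg intervalIntegrable_const (br_II hf hg),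
    hEndpoint_ctrl _ _ _ hp hq intervalIntegrable_const (br_II hp hq),
    cat_int hf hp, cat_int hg hq, cat_br hf hg hp hq, hp0, hq0]
  refine Prod.ext ?_ (Prod.ext ?_ ?_) <;>
    simp [Prod.fst_add, Prod.snd_add]
  ring

lemma cf_loop_int (α : ℝ) : ∫ s in (0:ℝ)..1, cf 0 α s = 0 := by
  rw [cf_int]; ring

lemma cg_loop_int (β : ℝ) : ∫ s in (0:ℝ)..1, cg 0 β s = 0 := by
  rw [cg_int]; ring

lemma dH_vert (v : Heis) (a b : ℝ) :
    dH 0 (v + ((0:ℝ), (0:ℝ), a)) ≤ dH 0 (v + ((0:ℝ), (0:ℝ), b)) + 2 * Real.sqrt (60 * |a - b|) := by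
  have key : ∀ l ∈ SH (v + ((0:ℝ), (0:ℝ), b)),
      dH 0 (v + ((0:ℝ), (0:ℝ), a)) ≤ l + 2 * Real.sqrt (60 * |a - b|) := by
    rintro l ⟨u, hu, hu3, hue, hl⟩
    have hf : IntervalIntegrable (fun t => (u t).1) volume 0 1 := ⟨hu.1.fst, hu.2.fst⟩
    have hg : IntervalIntegrable (fun t => (u t).2.1) volume 0 1 :=
      ⟨hu.1.snd.fst, hu.2.snd.fst⟩
    have h3 : ∫ t in (0:ℝ)..1, (u t).2.2 = 0 := integral_zero_of_ae_Icc hu3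
    have hhor : hEndpoint (fun t => (((u t).1, (u t).2.1, (0:ℝ)) : Heis))
        = v + ((0:ℝ), (0:ℝ), b) := by
      have hd := hEndpoint_decomp u hu
      rw [h3, hue] at hd
      have : (((0:ℝ), (0:ℝ), (0:ℝ)) : Heis) = 0 := rfl
      rw [this, add_zero] at hd
      exact hd.symm
    obtain ⟨α, β, hle, hlc⟩ := vert_reach (a - b)
    have hend2 : hEndpoint (fun t =>
        ((cat (fun s => (u s).1) (cf 0 α) t, cat (fun s => (u s).2.1) (cg 0 β) t, (0:ℝ)) : Heis))
        = v + ((0:ℝ), (0:ℝ), a) := by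
      rw [cat_endpoint_hor hf hg (cf_II 0 α) (cg_II 0 β) (cf_loop_int α) (cg_loop_int β),
        hhor, hle]
      refine Prod.ext ?_ (Prod.ext ?_ ?_) <;>
        simp [Prod.fst_add, Prod.snd_add] <;> try ring
    calc dH 0 (v + ((0:ℝ), (0:ℝ), a))
        ≤ ∫ t in (0:ℝ)..1, Real.sqrt ((cat (fun s => (u s).1) (cf 0 α) t) ^ 2
            + (cat (fun s => (u s).2.1) (cg 0 β) t) ^ 2) :=
          dH_le (cat_II hf (cf_II 0 α)) (cat_II hg (cg_II 0 β)) hend2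
      _ = (∫ t in (0:ℝ)..1, Real.sqrt ((u t).1 ^ 2 + (u t).2.1 ^ 2))
            + ∫ t in (0:ℝ)..1, Real.sqrt ((cf 0 α t) ^ 2 + (cg 0 β t) ^ 2) :=
          cat_cost hf hg (cf_II 0 α) (cg_II 0 β)
      _ ≤ l + 2 * Real.sqrt (60 * |a - b|) := by
          rw [hl]
          exact add_le_add_right (le_trans (loop_cost α β) hlc) _
  have h2 : dH 0 (v + ((0:ℝ), (0:ℝ), a)) - 2 * Real.sqrt (60 * |a - b|)
      ≤ dH 0 (v + ((0:ℝ), (0:ℝ), b)) := by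
    rw [dH_zero_eq (v + ((0:ℝ), (0:ℝ), b))]
    exact le_csInf (SH_nonempty _) (fun l hl => by linarith [key l hl])
  linarith

/-! ### Continuity of the vertical profile of `dH` -/

lemma phi_key (q : Heis) (a b : ℝ) :
    dH 0 (q + ((0:ℝ), (0:ℝ), -a)) ≤ dH 0 (q + ((0:ℝ), (0:ℝ), -b)) + 2 * Real.sqrt (60 * |a - b|) := by
  have h := dH_vert q (-a) (-b)
  rwa [show |(-a) - (-b)| = |a - b| by rw [show (-a) - (-b) = -(a-b) by ring, abs_neg]] at h

lemma phi_continuous (q : Heis) : Continuous (fun l : ℝ => dH 0 (q + ((0:ℝ), (0:ℝ), -l))) := by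
  rw [Metric.continuous_iff]
  intro b ε hε
  refine ⟨ε^2/241, by positivity, fun a hab => ?_⟩
  have h1 := phi_key q a b
  have h2 := phi_key q b a
  rw [abs_sub_comm b a] at h2
  have habs : |dH 0 (q + ((0:ℝ),(0:ℝ),-a)) - dH 0 (q + ((0:ℝ),(0:ℝ),-b))|
      ≤ 2 * Real.sqrt (60 * |a - b|) := abs_sub_le_iff.mpr ⟨by linarith, by linarith⟩
  rw [Real.dist_eq] at hab ⊢
  have hsq : Real.sqrt (60 * |a - b|) < ε / 2 := by
    rw [Real.sqrt_lt' (by linarith)]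
    have : |a - b| < ε^2/241 := hab
    nlinarith [abs_nonneg (a - b)]
  calc |dH 0 (q + ((0:ℝ),(0:ℝ),-a)) - dH 0 (q + ((0:ℝ),(0:ℝ),-b))|
      ≤ 2 * Real.sqrt (60 * |a - b|) := habs
    _ < ε := by linarith


/-- for the `ℓ^∞`-type norm `‖u‖ = max(√(u₁²+u₂²), |u₃|)`, the closed
`d_F`-ball of radius `r` is the vertical `[−r,r]`-thickening of the closed sub-Riemannian
ball of radius `r`. -/
theorem stmt_15 :
    ∀ r : ℝ, 0 ≤ r →
      {q : Heis | dFin (fun u => max (Real.sqrt (u.1 ^ 2 + u.2.1 ^ 2)) |u.2.2|) 0 q ≤ r} =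
      {x : Heis | ∃ p : Heis, ∃ lam : ℝ, dH 0 p ≤ r ∧ lam ∈ Set.Icc (-r) r ∧
        x = p + lam • ((0:ℝ), (0:ℝ), (1:ℝ))} := by
  intro r hr
  ext q
  simp only [Set.mem_setOf_eq]
  constructor
  · intro hq
    have hq' : dFin Nrm 0 q ≤ r := hq
    have step : ∀ ε : ℝ, 0 < ε → ∃ l : ℝ, |l| ≤ r + ε ∧
        dH 0 (q + ((0:ℝ), (0:ℝ), -l)) ≤ r + ε := by
      intro ε hε
      have hlt : sInf (SF q) < r + ε := by
        rw [← dFin_zero_eq]; linarith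
      obtain ⟨c, hcS, hclt⟩ := (csInf_lt_iff (SF_bdd q) (SF_nonempty q)).1 hlt
      obtain ⟨v, hv, hve, hcval⟩ := hcS
      have hf : IntervalIntegrable (fun t => (v t).1) volume 0 1 := ⟨hv.1.fst, hv.2.fst⟩
      have hg : IntervalIntegrable (fun t => (v t).2.1) volume 0 1 :=
        ⟨hv.1.snd.fst, hv.2.snd.fst⟩
      have hh : IntervalIntegrable (fun t => (v t).2.2) volume 0 1 :=
        ⟨hv.1.snd.snd, hv.2.snd.snd⟩
      have hmax : IntervalIntegrable
          (fun t => max (Real.sqrt ((v t).1^2 + (v t).2.1^2)) |(v t).2.2|) volume 0 1 :=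
        max_cost_II hf hg hh
      have hcval' : c = ∫ t in (0:ℝ)..1,
          max (Real.sqrt ((v t).1^2 + (v t).2.1^2)) |(v t).2.2| := hcval
      have hlam : |∫ t in (0:ℝ)..1, (v t).2.2| ≤ c := by
        rw [hcval']
        calc |∫ t in (0:ℝ)..1, (v t).2.2| ≤ ∫ t in (0:ℝ)..1, |(v t).2.2| :=
              intervalIntegral.abs_integral_le_integral_abs (by norm_num)
          _ ≤ _ := intervalIntegral.integral_mono_on (by norm_num) hh.abs hmax
              (fun t _ => le_max_right _ _)
      have hcost : ∫ t in (0:ℝ)..1, Real.sqrt ((v t).1^2 + (v t).2.1^2) ≤ c := by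
        rw [hcval']
        exact intervalIntegral.integral_mono_on (by norm_num) (sqrt_cost_II hf hg) hmax
          (fun t _ => le_max_left _ _)
      have hdec := hEndpoint_decomp v hv
      rw [hve] at hdec
      have hhor : hEndpoint (fun t => (((v t).1, (v t).2.1, (0:ℝ)) : Heis))
          = q + ((0:ℝ), (0:ℝ), -(∫ t in (0:ℝ)..1, (v t).2.2)) := by
        rw [hdec]
        refine Prod.ext ?_ (Prod.ext ?_ ?_) <;>
          simp [Prod.fst_add, Prod.snd_add] <;> try ring
      exact ⟨∫ t in (0:ℝ)..1, (v t).2.2, le_trans hlam (le_of_lt hclt),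
        le_trans (le_trans (dH_le hf hg hhor) hcost) (le_of_lt hclt)⟩
    have main : ∃ lam : ℝ, |lam| ≤ r ∧ dH 0 (q + ((0:ℝ), (0:ℝ), -lam)) ≤ r := by
      by_contra hcon
      push_neg at hcon
      obtain ⟨l₀, hl₀, hmin⟩ := isCompact_Icc.exists_isMinOn
        (Set.nonempty_Icc.mpr (neg_le_self hr)) (phi_continuous q).continuousOn
      have hm : r < dH 0 (q + ((0:ℝ), (0:ℝ), -l₀)) :=
        hcon l₀ (abs_le.mpr ⟨hl₀.1, hl₀.2⟩)
      set δ := dH 0 (q + ((0:ℝ), (0:ℝ), -l₀)) - r with hδ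
      have hδpos : 0 < δ := by linarith
      have hεpos : 0 < min (δ/4) (δ^2/4000) := lt_min (by linarith) (by positivity)
      obtain ⟨l, hlb, hφl⟩ := step _ hεpos
      set ε := min (δ/4) (δ^2/4000) with hεdef
      set l' := max (-r) (min r l) with hl'def
      have hl'mem : l' ∈ Set.Icc (-r) r :=
        ⟨le_max_left _ _, max_le (neg_le_self hr) (min_le_left _ _)⟩
      have habs := abs_le.mp hlb
      have hll' : |l' - l| ≤ ε := by
        rcases le_total l (-r) with h | h
        · have h1 : min r l = l := min_eq_right (le_trans h (neg_le_self hr))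
          have h2 : l' = -r := by rw [hl'def, h1]; exact max_eq_left h
          rw [h2, abs_of_nonneg (by linarith)]
          linarith [habs.1]
        · rcases le_total r l with h' | h'
          · have h1 : min r l = r := min_eq_left h'
            have h2 : l' = r := by rw [hl'def, h1]; exact max_eq_right (neg_le_self hr)
            rw [h2, abs_of_nonpos (by linarith)]
            linarith [habs.2]
          · have h1 : min r l = l := min_eq_right h'
            have h2 : l' = l := by rw [hl'def, h1]; exact max_eq_right h
            rw [h2, sub_self, abs_zero]
            exact le_of_lt hεpos
      have hsq : 2 * Real.sqrt (60 * |l' - l|) ≤ δ/2 := by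
        have h60 : 60 * |l' - l| ≤ (δ/4)^2 := by
          have hε2 : ε ≤ δ^2/4000 := min_le_right _ _
          nlinarith [abs_nonneg (l' - l)]
        calc 2 * Real.sqrt (60 * |l' - l|) ≤ 2 * Real.sqrt ((δ/4)^2) := by
              have := Real.sqrt_le_sqrt h60
              linarith
          _ = 2 * (δ/4) := by rw [Real.sqrt_sq (by linarith)]
          _ = δ/2 := by ring
      have hstep := phi_key q l' l
      have hεδ : ε ≤ δ/4 := min_le_left _ _
      have hlow := hmin hl'mem
      simp only [Set.mem_setOf_eq] at hlow
      have : dH 0 (q + ((0:ℝ), (0:ℝ), -l₀)) ≤ dH 0 (q + ((0:ℝ), (0:ℝ), -l')) := hlow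
      linarith
    obtain ⟨lam, hlam, hphi⟩ := main
    refine ⟨q + ((0:ℝ), (0:ℝ), -lam), lam, hphi,
      Set.mem_Icc.mpr ⟨(abs_le.mp hlam).1, (abs_le.mp hlam).2⟩, ?_⟩
    refine Prod.ext ?_ (Prod.ext ?_ ?_) <;>
      simp [Prod.fst_add, Prod.snd_add, smul_eq_mul] <;> try ring
  · rintro ⟨p, lam, hp, hlamI, rfl⟩
    have hlam' : |lam| ≤ r := abs_le.mpr ⟨hlamI.1, hlamI.2⟩
    apply le_of_forall_pos_le_add
    intro ε hε
    have hlt : sInf (SH p) < r + ε := by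
      rw [← dH_zero_eq]; linarith
    obtain ⟨l, ⟨u, hu, hu3, hue, hlval⟩, hllt⟩ := (csInf_lt_iff (SH_bdd p) (SH_nonempty p)).1 hlt
    have hf : IntervalIntegrable (fun t => (u t).1) volume 0 1 := ⟨hu.1.fst, hu.2.fst⟩
    have hg : IntervalIntegrable (fun t => (u t).2.1) volume 0 1 :=
      ⟨hu.1.snd.fst, hu.2.snd.fst⟩
    have h3 : ∫ t in (0:ℝ)..1, (u t).2.2 = 0 := integral_zero_of_ae_Icc hu3
    have hdec := hEndpoint_decomp u hu
    rw [h3, hue] at hdec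
    have hhor : hEndpoint (fun t => (((u t).1, (u t).2.1, (0:ℝ)) : Heis)) = p := by
      have : (((0:ℝ), (0:ℝ), (0:ℝ)) : Heis) = 0 := rfl
      rw [this, add_zero] at hdec
      exact hdec.symm
    have hsqII := sqrt_cost_II hf hg
    have hl0 : 0 ≤ l := by
      rw [hlval]
      exact intervalIntegral.integral_nonneg (by norm_num) (fun t _ => Real.sqrt_nonneg _)
    rcases eq_or_lt_of_le hl0 with h0 | hpos
    · -- degenerate case: horizontal length zero, so p = 0
      have hae : ∀ᵐ t ∂(volume.restrict (Set.Ioc (0:ℝ) 1)),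
          Real.sqrt ((u t).1^2 + (u t).2.1^2) = 0 := by
        have hint := (intervalIntegrable_iff_integrableOn_Ioc_of_le
          (by norm_num : (0:ℝ) ≤ 1)).1 hsqII
        have hzero : ∫ t in Set.Ioc (0:ℝ) 1, Real.sqrt ((u t).1^2 + (u t).2.1^2) = 0 := by
          rw [← intervalIntegral.integral_of_le (by norm_num : (0:ℝ) ≤ 1), ← hlval, ← h0]
        have := (integral_eq_zero_iff_of_nonneg_ae
          (Filter.Eventually.of_forall fun t => Real.sqrt_nonneg _) hint).1 hzero
        filter_upwards [this] with t ht
        exact ht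
      have hf0 : ∀ᵐ t ∂(volume.restrict (Set.Ioc (0:ℝ) 1)), (u t).1 = 0 := by
        filter_upwards [hae] with t ht
        have h2 : (u t).1^2 + (u t).2.1^2 ≤ 0 := Real.sqrt_eq_zero'.1 ht
        nlinarith [sq_nonneg (u t).1, sq_nonneg (u t).2.1]
      have hg0 : ∀ᵐ t ∂(volume.restrict (Set.Ioc (0:ℝ) 1)), (u t).2.1 = 0 := by
        filter_upwards [hae] with t ht
        have h2 : (u t).1^2 + (u t).2.1^2 ≤ 0 := Real.sqrt_eq_zero'.1 ht
        nlinarith [sq_nonneg (u t).1, sq_nonneg (u t).2.1]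
      have hint1 : ∫ t in (0:ℝ)..1, (u t).1 = 0 := by
        rw [intervalIntegral.integral_of_le (by norm_num : (0:ℝ) ≤ 1)]
        exact integral_eq_zero_of_ae hf0
      have hint2 : ∫ t in (0:ℝ)..1, (u t).2.1 = 0 := by
        rw [intervalIntegral.integral_of_le (by norm_num : (0:ℝ) ≤ 1)]
        exact integral_eq_zero_of_ae hg0
      have hintbr : ∫ t in (0:ℝ)..1, br (fun t => (u t).1) (fun t => (u t).2.1) t = 0 := by
        rw [intervalIntegral.integral_of_le (by norm_num : (0:ℝ) ≤ 1)]
        apply integral_eq_zero_of_ae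
        filter_upwards [hf0, hg0] with t h1 h2
        show (∫ s in (0:ℝ)..t, (u s).1) * (u t).2.1
          - (u t).1 * (∫ s in (0:ℝ)..t, (u s).2.1) = 0
        rw [h1, h2]
        ring
      have hp0 : p = 0 := by
        rw [← hhor, hEndpoint_ctrl _ _ _ hf hg intervalIntegrable_const (br_II hf hg),
          hint1, hint2, hintbr]
        refine Prod.ext ?_ (Prod.ext ?_ ?_) <;> simp
      have hend : hEndpoint (fun _ => (((0:ℝ), (0:ℝ), lam) : Heis))
          = p + lam • ((0:ℝ), (0:ℝ), (1:ℝ)) := by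
        rw [hEndpoint_ctrl (fun _ => 0) (fun _ => 0) (fun _ => lam)
          intervalIntegrable_const intervalIntegrable_const intervalIntegrable_const
          (by
            have : br (fun _ => (0:ℝ)) (fun _ => (0:ℝ)) = fun _ => (0:ℝ) := by
              funext t; unfold br; ring
            rw [this]; exact intervalIntegrable_const),
          hp0]
        have : br (fun _ => (0:ℝ)) (fun _ => (0:ℝ)) = fun _ => (0:ℝ) := by
          funext t; unfold br; ring
        rw [this]
        refine Prod.ext ?_ (Prod.ext ?_ ?_) <;>
          simp [Prod.fst_add, Prod.snd_add, smul_eq_mul]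
      calc dFin (fun u => max (Real.sqrt (u.1 ^ 2 + u.2.1 ^ 2)) |u.2.2|) 0
            (p + lam • ((0:ℝ), (0:ℝ), (1:ℝ)))
          ≤ ∫ t in (0:ℝ)..1, Nrm (((0:ℝ), (0:ℝ), lam) : Heis) :=
            dFin_le (II_triple _ _ _ _ _ intervalIntegrable_const intervalIntegrable_const
              intervalIntegrable_const) hend
        _ = |lam| := by
            simp [Nrm]
        _ ≤ r + ε := by linarith
    · -- main case: positive horizontal length
      set h := fun t => (lam / l) * Real.sqrt ((u t).1^2 + (u t).2.1^2) with hhdef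
      have hhII : IntervalIntegrable h volume 0 1 := hsqII.const_mul _
      have hinth : ∫ t in (0:ℝ)..1, h t = lam := by
        rw [hhdef]
        rw [intervalIntegral.integral_const_mul, ← hlval, div_mul_cancel₀ _ (ne_of_gt hpos)]
      have hend : hEndpoint (fun t => (((u t).1, (u t).2.1, h t) : Heis))
          = p + lam • ((0:ℝ), (0:ℝ), (1:ℝ)) := by
        rw [hEndpoint_ctrl _ _ _ hf hg hhII (br_II hf hg), hinth]
        rw [← hhor, hEndpoint_ctrl _ _ _ hf hg intervalIntegrable_const (br_II hf hg)]
        refine Prod.ext ?_ (Prod.ext ?_ ?_) <;>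
          simp [Prod.fst_add, Prod.snd_add, smul_eq_mul] <;> try ring
      have hpointwise : ∀ t, Nrm (((u t).1, (u t).2.1, h t) : Heis)
          = max 1 (|lam| / l) * Real.sqrt ((u t).1^2 + (u t).2.1^2) := by
        intro t
        have hs : (0:ℝ) ≤ Real.sqrt ((u t).1^2 + (u t).2.1^2) := Real.sqrt_nonneg _
        show max (Real.sqrt ((u t).1^2 + (u t).2.1^2)) |h t| = _
        rw [hhdef]
        rw [abs_mul, abs_div, abs_of_pos hpos, abs_of_nonneg hs]
        rcases le_total (|lam| / l) 1 with hc | hc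
        · rw [max_eq_left (by nlinarith), max_eq_left hc, one_mul]
        · rw [max_eq_right (by nlinarith), max_eq_right hc]
      have hcost : ∫ t in (0:ℝ)..1, Nrm (((u t).1, (u t).2.1, h t) : Heis) = max l |lam| := by
        rw [intervalIntegral.integral_congr (fun t _ => hpointwise t),
          intervalIntegral.integral_const_mul, ← hlval]
        rcases le_total (|lam| / l) 1 with hc | hc
        · rw [max_eq_left hc, one_mul, max_eq_left (by
            rw [div_le_one hpos] at hc; exact hc)]
        · rw [max_eq_right hc, max_eq_right (by
            rw [one_le_div hpos] at hc; exact hc), div_mul_cancel₀ _ (ne_of_gt hpos)]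
      calc dFin (fun u => max (Real.sqrt (u.1 ^ 2 + u.2.1 ^ 2)) |u.2.2|) 0
            (p + lam • ((0:ℝ), (0:ℝ), (1:ℝ)))
          ≤ ∫ t in (0:ℝ)..1, Nrm (((u t).1, (u t).2.1, h t) : Heis) :=
            dFin_le (II_triple _ _ _ _ _ hf hg hhII) hend
        _ = max l |lam| := hcost
        _ ≤ r + ε := max_le (le_of_lt hllt) (by linarith)
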